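/- For 0 ≤ s ≤ r, define Fil^{r,s}(V_g(O)) = { Σ b_j X^j Y^{g-j} ∈ Fil^r(V_g(O)) : p^{r-j+1} | b_j for r+1-s ≤ j ≤ r }. Then the quotient Fil^{r,s}/Fil^{r,s+1} is isomorphic as an S_0(p)-module to O/pO with γ = [[a,b],[c,d]] acting by multiplication by det(γ)^{r-s} · a^{g-2r+2s}, and this quotient is generated by the image of p^s X^{r-s} Y^{g-r+s}. -/

import Mathlib

open MvPolynomial

section Aux

open Finsupp

lemma idx_inj (u w k m : ℕ) :
    (single (0:Fin 2) u + single 1 w = single (0:Fin 2) k + single 1 m) ↔ (u = k ∧ w = m) := by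
  constructor
  · intro h
    constructor
    · have := DFunLike.congr_fun h 0
      simpa using this
    · have := DFunLike.congr_fun h 1
      simpa using this
  · rintro ⟨rfl, rfl⟩; rfl

lemma fin2_decomp (n : Fin 2 →₀ ℕ) : n = single 0 (n 0) + single 1 (n 1) := by
  ext i
  fin_cases i <;> simp

lemma binom_expand {O : Type*} [CommRing O] (u v : O) (n : ℕ) :
    (C u * X 0 + C v * X 1 : MvPolynomial (Fin 2) O) ^ n =
      ∑ i ∈ Finset.range (n+1),
        monomial (single 0 i + single 1 (n - i)) (u ^ i * v ^ (n - i) * (n.choose i)) := by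
  rw [add_pow]
  apply Finset.sum_congr rfl
  intro i hi
  have : ((n.choose i : ℕ) : MvPolynomial (Fin 2) O) = C ((n.choose i : ℕ) : O) := by
    simp
  rw [mul_pow, mul_pow, ← C_pow, ← C_pow, X_pow_eq_monomial, X_pow_eq_monomial, this,
    C_mul_monomial, C_mul_monomial]
  rw [monomial_mul, mul_comm _ (C ((n.choose i : ℕ) : O)), C_mul_monomial]
  ring_nf

lemma coeff_prod_pow {O : Type*} [CommRing O] (u v u' v' : O) (n n' k m : ℕ) :
    coeff (single (0:Fin 2) k + single 1 m)
      ((C u * X 0 + C v * X 1) ^ n * (C u' * X 0 + C v' * X 1) ^ n') =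
    ∑ i ∈ Finset.range (n+1), ∑ l ∈ Finset.range (n'+1),
      (if i + l = k ∧ (n - i) + (n' - l) = m then
        u ^ i * v ^ (n - i) * (n.choose i) * (u' ^ l * v' ^ (n' - l) * (n'.choose l)) else 0) := by
  rw [binom_expand, binom_expand, Finset.sum_mul_sum]
  rw [coeff_sum]
  apply Finset.sum_congr rfl
  intro i _
  rw [coeff_sum]
  apply Finset.sum_congr rfl
  intro l _
  rw [monomial_mul, coeff_monomial]
  have hidx : (single (0:Fin 2) i + single 1 (n - i)) + (single (0:Fin 2) l + single 1 (n' - l))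
      = single (0:Fin 2) (i + l) + single 1 ((n - i) + (n' - l)) := by
    ext t; fin_cases t <;> simp
  rw [hidx]
  rw [if_congr (idx_inj _ _ _ _) rfl rfl]

lemma zsmul_poly {O : Type*} [CommRing O] (z : ℤ) (Q : MvPolynomial (Fin 2) O) :
    z • Q = C ((z : O)) * Q := by
  rw [zsmul_eq_mul, ← map_intCast (C : O →+* MvPolynomial (Fin 2) O) z]

lemma pow_dvd_term {O : Type*} [CommRing O] (p : ℕ) (c e t : O) (E n m : ℕ)
    (hE : (p:O)^E ∣ e) (hc : (p:O) ∣ c) (ht : (-c)^n ∣ t) (hm : m ≤ E + n) :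
    (p:O)^m ∣ e * t := by
  refine dvd_trans (pow_dvd_pow _ hm) ?_
  rw [pow_add]
  exact mul_dvd_mul hE (dvd_trans (pow_dvd_pow_of_dvd (dvd_neg.mpr hc) n) ht)

lemma key_dvd {O : Type*} [CommRing O] (p r s g j k : ℕ) (a b c d e : O)
    (hc : (p:O) ∣ c)
    (hs : s ≤ r) (hrg : r ≤ g) (hexp : 2*r ≤ g + 2*s) (hjg : j ≤ g) (hk : k ≤ r)
    (he1 : j < r → (p:O)^(r-j) ∣ e)
    (he2 : r+1-s ≤ j → j ≤ r → (p:O)^(r-j+1) ∣ e)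
    (m : ℕ) (hm1 : r - s ≤ k → m = r - k + 1) (hm2 : k < r - s → m = r - k) :
    (p:O)^m ∣ coeff (single (0:Fin 2) k + single 1 (g-k))
      (C e * ((C d * X 0 + C (-c) * X 1)^j * (C (-b) * X 0 + C a * X 1)^(g-j))
        - monomial (single (0:Fin 2) j + single 1 (g-j))
            ((a*d - b*c)^(r-s) * a^(g+2*s-2*r) * e)) := by
  have heR : j ≤ r → (p:O)^(r-j) ∣ e := by
    intro hjr; rcases lt_or_eq_of_le hjr with h|h
    · exact he1 h
    · simp [h]
  have hmd : (r - s ≤ k ∧ m = r - k + 1) ∨ (k < r - s ∧ m = r - k) := by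
    rcases le_or_gt (r-s) k with h|h
    · exact Or.inl ⟨h, hm1 h⟩
    · exact Or.inr ⟨h, hm2 h⟩
  rw [coeff_sub, coeff_C_mul, coeff_prod_pow, coeff_monomial]
  rw [if_congr (idx_inj _ _ _ _) rfl rfl]
  by_cases hjk : j = k
  · subst hjk
    rw [if_pos ⟨rfl, rfl⟩]
    rw [Finset.sum_range_succ]
    have hinner : (∑ l ∈ Finset.range (g - j + 1),
        if j + l = j ∧ (j - j) + (g - j - l) = g - j then
          d ^ j * (-c) ^ (j - j) * (j.choose j : O)
            * ((-b) ^ l * a ^ (g - j - l) * (((g-j).choose l : ℕ) : O)) else 0)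
        = d ^ j * a ^ (g - j) := by
      rw [Finset.sum_eq_single 0]
      · rw [if_pos (by omega)]
        simp
      · intro l _ hl
        rw [if_neg (by omega)]
      · intro h
        exact absurd (Finset.mem_range.mpr (by omega)) h
    rw [hinner, mul_add, add_sub_assoc]
    apply dvd_add
    · rw [Finset.mul_sum]
      apply Finset.dvd_sum
      intro i hi
      rw [Finset.mul_sum]
      apply Finset.dvd_sum
      intro l hl
      split_ifs with hcond
      · have hij : i < j := Finset.mem_range.mp hi
        exact pow_dvd_term p c e _ (r-j) (j-i) m (heR hk) hc
          ⟨d^i * ((j.choose i : ℕ) : O) * ((-b)^l * a^(g-j-l) * (((g-j).choose l : ℕ) : O)),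
            by ring⟩ (by omega)
      · simp
    · by_cases hks : j = r - s
      · have hgj : g - j = (g + 2*s - 2*r) + (r - s) := by omega
        have hkey : e * (d^j * a^(g-j)) - (a*d-b*c)^(r-s) * a^(g+2*s-2*r) * e
            = (e * ((a*d)^(r-s) - (a*d-b*c)^(r-s))) * a^(g+2*s-2*r) := by
          rw [hgj, pow_add, hks, mul_pow]
          ring
        rw [hkey]
        have h1 : (p:O)^s ∣ e := by
          have := heR hk
          rwa [show r - j = s by omega] at this
        have h2 : (p:O) ∣ (a*d)^(r-s) - (a*d - b*c)^(r-s) := by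
          have h3 : (a*d) - (a*d - b*c) ∣ (a*d)^(r-s) - (a*d-b*c)^(r-s) :=
            sub_dvd_pow_sub_pow _ _ _
          rw [show a*d - (a*d - b*c) = b * c by ring] at h3
          exact dvd_trans (Dvd.dvd.mul_left hc b) h3
        rw [show m = s + 1 by omega, pow_succ]
        exact Dvd.dvd.mul_right (mul_dvd_mul h1 h2) _
      · have hEe : (p:O)^m ∣ e := by
          by_cases h : r - s ≤ j
          · have := he2 (by omega) hk
            rwa [show r - j + 1 = m by omega] at this
          · have := he1 (by omega)
            rwa [show r - j = m by omega] at this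
        exact dvd_sub (hEe.mul_right _) (hEe.mul_left _)
  · rw [if_neg (fun h => hjk h.1)]
    rw [sub_zero, Finset.mul_sum]
    apply Finset.dvd_sum
    intro i hi
    rw [Finset.mul_sum]
    apply Finset.dvd_sum
    intro l hl
    split_ifs with hcond
    · have hi' : i < j + 1 := Finset.mem_range.mp hi
      obtain ⟨hil, -⟩ := hcond
      by_cases hjr : j ≤ r
      · by_cases hjs : r + 1 - s ≤ j
        · exact pow_dvd_term p c e _ (r-j+1) (j-i) m (he2 hjs hjr) hc
            ⟨d^i * ((j.choose i : ℕ) : O) * ((-b)^l * a^(g-j-l) * (((g-j).choose l : ℕ) : O)),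
              by ring⟩ (by omega)
        · exact pow_dvd_term p c e _ (r-j) (j-i) m (heR hjr) hc
            ⟨d^i * ((j.choose i : ℕ) : O) * ((-b)^l * a^(g-j-l) * (((g-j).choose l : ℕ) : O)),
              by ring⟩ (by omega)
      · exact pow_dvd_term p c e _ 0 (j-i) m (by simp) hc
            ⟨d^i * ((j.choose i : ℕ) : O) * ((-b)^l * a^(g-j-l) * (((g-j).choose l : ℕ) : O)),
              by ring⟩ (by omega)
    · simp

end Aux

/-- The right action of an integral 2×2 matrix `γ = [[a,b],[c,d]]` on polynomials in
`X = X 0`, `Y = X 1`: `(P|γ)(X,Y) = P(dX - cY, -bX + aY)`. -/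
noncomputable def matAct {R : Type*} [CommRing R] (γ : Matrix (Fin 2) (Fin 2) ℤ)
    (P : MvPolynomial (Fin 2) R) : MvPolynomial (Fin 2) R :=
  MvPolynomial.aeval
    ![γ 1 1 • MvPolynomial.X 0 - γ 1 0 • MvPolynomial.X 1,
      -(γ 0 1 • MvPolynomial.X 0) + γ 0 0 • MvPolynomial.X 1] P

/-- The semigroup `S_0(p)`. -/
def memS0 (p : ℕ) (γ : Matrix (Fin 2) (Fin 2) ℤ) : Prop :=
  γ.det ≠ 0 ∧ (p : ℤ) ∣ γ 1 0 ∧ ¬ (p : ℤ) ∣ γ 0 0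

/-- Membership in `Fil^r(V_g(O)) = { Σ b_j X^j Y^{g-j} : p^{r-j} ∣ b_j for 0 ≤ j ≤ r-1 }`:
the coefficient `b_j` of `X^j Y^{g-j}` is divisible by `p^{r-j}` for `j < r`. -/
def inFil (O : Type*) [CommRing O] (p g r : ℕ) (P : MvPolynomial (Fin 2) O) : Prop :=
  ∀ j < r, (p : O) ^ (r - j) ∣
    MvPolynomial.coeff (Finsupp.single (0 : Fin 2) j + Finsupp.single (1 : Fin 2) (g - j)) P

/-- Membership in `Fil^{r,s}(V_g(O))`: `P ∈ Fil^r` and additionally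
`p^{r-j+1} ∣ b_j` for `r+1-s ≤ j ≤ r`.  (With this convention
`Fil^{r,r+1} = Fil^{r+1}`.) -/
def inFilRS (O : Type*) [CommRing O] (p g r s : ℕ) (P : MvPolynomial (Fin 2) O) : Prop :=
  inFil O p g r P ∧ ∀ j, r + 1 - s ≤ j → j ≤ r → (p : O) ^ (r - j + 1) ∣
    MvPolynomial.coeff (Finsupp.single (0 : Fin 2) j + Finsupp.single (1 : Fin 2) (g - j)) P

/-- The generator `p^s X^{r-s} Y^{g-r+s}` of `Fil^{r,s}/Fil^{r,s+1}`. -/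
noncomputable def filGen (O : Type*) [CommRing O] (p g r s : ℕ) : MvPolynomial (Fin 2) O :=
  MvPolynomial.monomial
    (Finsupp.single (0 : Fin 2) (r - s) + Finsupp.single (1 : Fin 2) (g - (r - s)))
    ((p : O) ^ s)

section Aux2

lemma matAct_monomial {O : Type*} [CommRing O] (γ : Matrix (Fin 2) (Fin 2) ℤ) (j m : ℕ) (e : O) :
    matAct γ (monomial (Finsupp.single (0:Fin 2) j + Finsupp.single 1 m) e) =
      C e * ((C ((γ 1 1 : ℤ):O) * X 0 + C (-((γ 1 0 : ℤ):O)) * X 1) ^ j *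
        (C (-((γ 0 1 : ℤ):O)) * X 0 + C ((γ 0 0 : ℤ):O) * X 1) ^ m) := by
  rw [matAct, aeval_monomial]
  rw [Finsupp.prod_fintype _ _ (fun i => pow_zero _)]
  rw [Fin.prod_univ_two]
  simp only [Matrix.cons_val_zero, Matrix.cons_val_one, Matrix.head_cons, algebraMap_eq,
    Finsupp.coe_add, Pi.add_apply, Finsupp.single_eq_same,
    Finsupp.single_eq_of_ne (show (0:Fin 2) ≠ 1 by decide),
    Finsupp.single_eq_of_ne (show (1:Fin 2) ≠ 0 by decide), add_zero, zero_add]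
  rw [zsmul_poly, zsmul_poly, zsmul_poly, zsmul_poly]
  rw [show (C (-((γ 1 0 : ℤ):O)) : MvPolynomial (Fin 2) O) = -C ((γ 1 0 : ℤ):O) from map_neg C _,
      show (C (-((γ 0 1 : ℤ):O)) : MvPolynomial (Fin 2) O) = -C ((γ 0 1 : ℤ):O) from map_neg C _]
  ring

lemma coeff_C_filGen {O : Type*} [CommRing O] (p g r s : ℕ) (c : O) (k : ℕ) :
    coeff (Finsupp.single (0:Fin 2) k + Finsupp.single 1 (g-k)) (C c * filGen O p g r s)
      = if r - s = k then c * (p:O)^s else 0 := by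
  rw [filGen, C_mul_monomial, coeff_monomial]
  rw [if_congr (idx_inj _ _ _ _) rfl rfl]
  by_cases h : r - s = k
  · rw [if_pos ⟨h, by rw [h]⟩, if_pos h]
  · rw [if_neg (fun hh => h hh.1), if_neg h]

end Aux2

theorem fil_quotient_structure (p g r s : ℕ) (hp : p.Prime)
    (O : Type*) [CommRing O] [IsDomain O] (hpO : (p : O) ≠ 0)
    (hs : s ≤ r) (hrg : r ≤ g) (hexp : 2 * r ≤ g + 2 * s) :
    (∀ P : MvPolynomial (Fin 2) O, P.IsHomogeneous g → inFilRS O p g r s P →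
        ∃ c : O, inFilRS O p g r (s + 1) (P - MvPolynomial.C c * filGen O p g r s)) ∧
      (∀ c : O, inFilRS O p g r (s + 1) (MvPolynomial.C c * filGen O p g r s) ↔ (p : O) ∣ c) ∧
      (∀ γ : Matrix (Fin 2) (Fin 2) ℤ, memS0 p γ →
        ∀ P : MvPolynomial (Fin 2) O, P.IsHomogeneous g → inFilRS O p g r s P →
          inFilRS O p g r (s + 1)
            (matAct γ P - (γ.det ^ (r - s) * (γ 0 0) ^ (g + 2 * s - 2 * r)) • P)) := by
  refine ⟨?_, ?_, ?_⟩
  · -- part (i)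
    intro P hPhom hP
    have hb : (p:O)^s ∣
        coeff (Finsupp.single (0:Fin 2) (r-s) + Finsupp.single 1 (g-(r-s))) P := by
      by_cases hs0 : s = 0
      · simp [hs0]
      · have := hP.1 (r-s) (by omega)
        rwa [show r - (r-s) = s by omega] at this
    obtain ⟨c, hcc⟩ := hb
    refine ⟨c, ?_, ?_⟩
    · intro k hk
      rw [coeff_sub, coeff_C_filGen]
      by_cases hk' : r - s = k
      · rw [if_pos hk', ← hk', hcc]
        rw [show (p:O)^s * c - c * (p:O)^s = 0 by ring]
        exact dvd_zero _
      · rw [if_neg hk', sub_zero]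
        exact hP.1 k hk
    · intro k hk1 hk2
      rw [coeff_sub, coeff_C_filGen]
      by_cases hk' : r - s = k
      · rw [if_pos hk', ← hk', hcc]
        rw [show (p:O)^s * c - c * (p:O)^s = 0 by ring]
        exact dvd_zero _
      · rw [if_neg hk', sub_zero]
        exact hP.2 k (by omega) hk2
  · -- part (ii)
    intro c
    constructor
    · intro h
      have h2 := h.2 (r-s) (by omega) (by omega)
      rw [coeff_C_filGen, if_pos rfl, show r - (r-s) + 1 = s + 1 by omega] at h2
      obtain ⟨t, ht⟩ := h2
      refine ⟨t, ?_⟩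
      have hps : ((p:O)^s) ≠ 0 := pow_ne_zero _ hpO
      apply mul_left_cancel₀ hps
      calc (p:O)^s * c = c * (p:O)^s := mul_comm _ _
        _ = (p:O)^(s+1) * t := ht
        _ = (p:O)^s * ((p:O)*t) := by ring
    · rintro ⟨t, ht⟩
      constructor
      · intro k hk
        rw [coeff_C_filGen]
        by_cases hk' : r - s = k
        · rw [if_pos hk', ← hk']
          rw [show r - (r - s) = s by omega]
          exact ⟨c, mul_comm _ _⟩
        · rw [if_neg hk']
          exact dvd_zero _
      · intro k hk1 hk2
        rw [coeff_C_filGen]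
        by_cases hk' : r - s = k
        · rw [if_pos hk', ← hk']
          rw [show r - (r - s) + 1 = s + 1 by omega]
          exact ⟨t, by rw [ht]; ring⟩
        · rw [if_neg hk']
          exact dvd_zero _
  · -- part (iii)
    rintro γ ⟨hdet, hγc, hγa⟩ P hPhom hP
    set a : O := ((γ 0 0 : ℤ) : O) with ha
    set b : O := ((γ 0 1 : ℤ) : O) with hbb
    set c : O := ((γ 1 0 : ℤ) : O) with hcd
    set d : O := ((γ 1 1 : ℤ) : O) with hdd
    have hc : (p:O) ∣ c := by
      obtain ⟨t, ht⟩ := hγc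
      exact ⟨((t : ℤ) : O), by rw [hcd, ht]; push_cast; ring⟩
    set S : O := (a*d - b*c)^(r-s) * a^(g+2*s-2*r) with hSS
    have hzS : (((γ.det ^ (r - s) * (γ 0 0) ^ (g + 2 * s - 2 * r) : ℤ)) : O) = S := by
      rw [hSS, ha, hbb, hcd, hdd, Matrix.det_fin_two]
      push_cast
      ring
    have expand : matAct γ P - (γ.det ^ (r - s) * (γ 0 0) ^ (g + 2 * s - 2 * r)) • P
        = ∑ n ∈ P.support,
            (matAct γ (monomial n (coeff n P)) - monomial n (S * coeff n P)) := by
      rw [Finset.sum_sub_distrib]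
      congr 1
      · conv_lhs => rw [← P.support_sum_monomial_coeff]
        simp only [matAct]
        exact map_sum _ _ _
      · rw [zsmul_poly, hzS]
        conv_lhs => rw [← P.support_sum_monomial_coeff]
        rw [Finset.mul_sum]
        exact Finset.sum_congr rfl (fun n _ => C_mul_monomial)
    have main : ∀ k ≤ r, ∀ m : ℕ, (r - s ≤ k → m = r - k + 1) → (k < r - s → m = r - k) →
        (p:O)^m ∣ coeff (Finsupp.single (0:Fin 2) k + Finsupp.single 1 (g-k))
          (matAct γ P - (γ.det ^ (r - s) * (γ 0 0) ^ (g + 2 * s - 2 * r)) • P) := by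
      intro k hk m hm1 hm2
      rw [expand, coeff_sum]
      apply Finset.dvd_sum
      intro n hn
      have hne : coeff n P ≠ 0 := mem_support_iff.mp hn
      have hdeg : n.degree = g := by
        by_contra h
        exact hne (hPhom.coeff_eq_zero h)
      have hsum : n 0 + n 1 = g := by
        rw [← hdeg, Finsupp.degree_apply]
        rw [show (∑ i ∈ n.support, n i) = ∑ i : Fin 2, n i from
          Finset.sum_subset (Finset.subset_univ _)
            (fun i _ hi => Finsupp.notMem_support_iff.mp hi)]
        rw [Fin.sum_univ_two]
      have hng : n = Finsupp.single (0:Fin 2) (n 0) + Finsupp.single 1 (g - n 0) := by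
        rw [show g - n 0 = n 1 by omega]
        exact fin2_decomp n
      rw [hng, matAct_monomial, hSS]
      exact key_dvd p r s g (n 0) k a b c d _ hc hs hrg hexp (by omega) hk
        (fun h => hP.1 (n 0) h) (fun h1 h2 => hP.2 (n 0) h1 h2) m hm1 hm2
    constructor
    · intro k hk
      rcases le_or_gt (r - s) k with h | h
      · exact dvd_trans (pow_dvd_pow _ (by omega))
          (main k (by omega) (r - k + 1) (fun _ => rfl) (by omega))
      · exact main k (by omega) (r - k) (by omega) (fun _ => rfl)
    · intro k hk1 hk2
      exact main k hk2 (r - k + 1) (fun _ => rfl) (by omega)
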